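/- Let F be a cellular automaton of radius r ≥ 1, let μ be a Borel probability measure on A^ℤ that is ergodic with respect to the shift σ, and let x ∈ A^ℤ be such that μ(B_{[−r,r]}(x)) > 0. Then B_{[−r,r]}(x) contains a spatially periodic configuration (i.e., a point fixed by some positive power of σ), and consequently the sequence of words (F^i(x)(−r,r))_{i≥0} is eventually periodic. -/

import Mathlib

open Function Set MeasureTheory Filter

/-- The configuration space `A^ℤ`. -/
abbrev Config (A : Type*) : Type _ := ℤ → A

/-- The shift map `σ(x)_i = x_{i+1}`. -/
def shift {A : Type*} (x : Config A) : Config A := fun i => x (i + 1)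

/-- A cellular automaton: a continuous self-map of `A^ℤ` commuting with the shift. -/
def IsCA {A : Type*} [TopologicalSpace A] (F : Config A → Config A) : Prop :=
  Continuous F ∧ F ∘ shift = shift ∘ F

/-- `F` has radius `r`: `F(x)_i` only depends on `x(i−r, i+r)`. -/
def HasRadius {A : Type*} (F : Config A → Config A) (r : ℕ) : Prop :=
  ∀ (x y : Config A) (i : ℤ),
    (∀ k : ℤ, i - r ≤ k → k ≤ i + r → x k = y k) → F x i = F y i

/-- `B_{[i₁,i₂]}(x) = {y : F^j(y)(i₁,i₂) = F^j(x)(i₁,i₂) for all j ≥ 0}`. -/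
def Bset {A : Type*} (F : Config A → Config A) (i₁ i₂ : ℤ) (x : Config A) :
    Set (Config A) :=
  {y | ∀ (j : ℕ) (k : ℤ), i₁ ≤ k → k ≤ i₂ → F^[j] y k = F^[j] x k}

/-- Iterated shift evaluates by translation. -/
lemma shift_iterate_apply {A : Type*} (x : Config A) (q : ℕ) (i : ℤ) :
    shift^[q] x i = x (i + q) := by
  induction q generalizing i with
  | zero => simp
  | succ n ih =>
    have hstep : shift (shift^[n] x) i = shift^[n] x (i + 1) := rfl
    rw [Function.iterate_succ_apply', hstep, ih]
    congr 1
    push_cast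
    ring

/-- Iterates of a CA commute with iterated shifts, pointwise. -/
lemma iter_shift_apply {A : Type*} {F : Config A → Config A}
    (hc : F ∘ shift = shift ∘ F) (j q : ℕ) (y : Config A) (k : ℤ) :
    F^[j] (shift^[q] y) k = F^[j] y (k + q) := by
  have h : Function.Commute F shift := fun z => congrFun hc z
  have h2 := (h.iterate_iterate j q) y
  rw [h2, shift_iterate_apply]

/-- A `q`-periodic configuration is determined by its values on `[0, q)`. -/
lemma periodic_eval_emod {A : Type*} {w : Config A} {q : ℕ}
    (hq : 0 < q) (hw : ∀ m : ℤ, w (m + q) = w m) (k : ℤ) :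
    w k = w (k % q) := by
  have key : ∀ n : ℤ, ∀ m : ℤ, w (m + n * q) = w m := by
    intro n
    induction n using Int.induction_on with
    | zero => simp
    | succ i ih =>
      intro m
      have : m + (i + 1 : ℤ) * q = (m + i * q) + q := by ring
      rw [this, hw, ih]
    | pred i ih =>
      intro m
      have e : m + (-i - 1 : ℤ) * q = (m + (-i : ℤ) * q) - q := by ring
      rw [e]
      have := hw ((m + (-i : ℤ) * q) - q)
      rw [sub_add_cancel] at this
      rw [← this]
      exact ih m
  have e : k = k % q + (k / q) * q := by
    have := Int.emod_add_mul_ediv k q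
    linarith
  calc w k = w (k % q + (k / q) * q) := by rw [← e]
    _ = w (k % q) := key _ _

theorem Bset_contains_spatially_periodic_and_words_eventually_periodic
    {A : Type} [Fintype A] [Nonempty A] [TopologicalSpace A] [DiscreteTopology A]
    [MeasurableSpace A] [BorelSpace A]
    (F : Config A → Config A) (hF : IsCA F) (r : ℕ) (hr : 1 ≤ r)
    (hrad : HasRadius F r)
    (μ : Measure (Config A)) [IsProbabilityMeasure μ]
    (herg : Ergodic shift μ)
    (x : Config A) (hpos : 0 < μ (Bset F (-(r : ℤ)) (r : ℤ) x)) :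
    (∃ z ∈ Bset F (-(r : ℤ)) (r : ℤ) x, ∃ q : ℕ, 0 < q ∧ shift^[q] z = z) ∧
    (∃ (m p : ℕ), 0 < p ∧ ∀ i : ℕ, m ≤ i →
      ∀ k : ℤ, -(r : ℤ) ≤ k → k ≤ (r : ℤ) → F^[i + p] x k = F^[i] x k) := by
  set B := Bset F (-(r : ℤ)) (r : ℤ) x with hB
  -- measurability of B
  have hmeas : MeasurableSet B := by
    have hrepr : B = ⋂ (j : ℕ), ⋂ (k : ℤ),
        {y : Config A | -(r : ℤ) ≤ k → k ≤ (r : ℤ) → F^[j] y k = F^[j] x k} := by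
      ext y
      simp only [hB, Bset, Set.mem_setOf_eq, Set.mem_iInter]
    rw [hrepr]
    refine MeasurableSet.iInter fun j => MeasurableSet.iInter fun k => ?_
    by_cases h1 : -(r : ℤ) ≤ k
    · by_cases h2 : k ≤ (r : ℤ)
      · simp only [h1, h2, forall_true_left]
        have hcont : Continuous fun y : Config A => F^[j] y k :=
          (continuous_apply k).comp (hF.1.iterate j)
        exact hcont.measurable (MeasurableSet.singleton (F^[j] x k))
      · simp only [h2, IsEmpty.forall_iff, imp_true_iff, Set.setOf_true]
        exact MeasurableSet.univ
    · simp only [h1, IsEmpty.forall_iff, Set.setOf_true]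
      exact MeasurableSet.univ
  -- Poincaré recurrence: find q > 2r with positive-measure return
  have hcons : MeasureTheory.Conservative shift μ :=
    herg.toMeasurePreserving.conservative
  obtain ⟨q, hq2r, hne⟩ := hcons.exists_gt_measure_inter_ne_zero
    hmeas.nullMeasurableSet hpos.ne' (2 * r)
  obtain ⟨y, hyB, hyq0⟩ := MeasureTheory.nonempty_of_measure_ne_zero hne
  have hy : ∀ (j : ℕ) (k : ℤ), -(r : ℤ) ≤ k → k ≤ (r : ℤ) → F^[j] y k = F^[j] x k := hyB
  have hy2 : ∀ (j : ℕ) (k : ℤ), -(r : ℤ) ≤ k → k ≤ (r : ℤ) →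
      F^[j] y (k + q) = F^[j] x k := by
    intro j k h1 h2
    have := (hyq0 : shift^[q] y ∈ B) j k h1 h2
    rwa [iter_shift_apply hF.2] at this
  have hqpos : 0 < q := by omega
  have hqZ : (2 * r : ℤ) < (q : ℤ) := by exact_mod_cast hq2r
  -- the periodic candidate
  set z : Config A := fun k : ℤ => y ((k + r) % q - r) with hz
  have hzq : ∀ k : ℤ, z (k + q) = z k := by
    intro k
    simp only [hz]
    congr 2
    have e : k + (q : ℤ) + r = (k + r) + (q : ℤ) * 1 := by ring
    rw [e, Int.add_mul_emod_self_left]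
  have hperiodic : shift^[q] z = z := by
    funext i
    rw [shift_iterate_apply]
    exact hzq i
  have hz_eq_y : ∀ k : ℤ, -(r : ℤ) ≤ k → k ≤ (q : ℤ) - r - 1 → z k = y k := by
    intro k h1 h2
    simp only [hz]
    rw [Int.emod_eq_of_lt (by omega) (by omega)]
    congr 1
    ring
  -- column periodicity of z
  have hFper : ∀ (j : ℕ) (k : ℤ), F^[j] z (k + q) = F^[j] z k := by
    intro j k
    rw [← iter_shift_apply hF.2, hperiodic]
  -- the main induction
  have main : ∀ (j : ℕ) (k : ℤ), -(r : ℤ) ≤ k → k ≤ (q : ℤ) + r →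
      F^[j] z k = F^[j] y k := by
    intro j
    induction j with
    | zero =>
      intro k h1 h2
      simp only [Function.iterate_zero, id_eq]
      by_cases h3 : k ≤ (q : ℤ) - r - 1
      · exact hz_eq_y k h1 h3
      · push_neg at h3
        have hk1 : -(r : ℤ) ≤ k - q := by omega
        have hk2 : k - (q : ℤ) ≤ r := by omega
        have e1 : z k = z (k - q) := by
          rw [← hzq (k - q), sub_add_cancel]
        have e2 : z (k - q) = y (k - q) := hz_eq_y _ hk1 (by omega)
        have e3 : y (k - q) = x (k - q) := by
          have := hy 0 (k - q) hk1 hk2; simpa using this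
        have e4 : y k = x (k - q) := by
          have := hy2 0 (k - q) hk1 hk2
          simp only [Function.iterate_zero, id_eq] at this
          rwa [sub_add_cancel] at this
        rw [e1, e2, e3, ← e4]
    | succ n ih =>
      have mid : ∀ k : ℤ, 0 ≤ k → k ≤ (q : ℤ) →
          F^[n + 1] z k = F^[n + 1] y k := by
        intro k h1 h2
        rw [Function.iterate_succ_apply', Function.iterate_succ_apply']
        apply hrad
        intro m hm1 hm2
        exact ih m (by omega) (by omega)
      intro k h1 h2
      rcases lt_or_ge k 0 with hc1 | hc1
      · calc F^[n + 1] z k = F^[n + 1] z (k + q) := (hFper (n + 1) k).symm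
          _ = F^[n + 1] y (k + q) := mid (k + q) (by omega) (by omega)
          _ = F^[n + 1] x k := hy2 (n + 1) k h1 (by omega)
          _ = F^[n + 1] y k := (hy (n + 1) k h1 (by omega)).symm
      · rcases le_or_gt k (q : ℤ) with hc2 | hc2
        · exact mid k hc1 hc2
        · have e1 : F^[n + 1] z k = F^[n + 1] z (k - q) := by
            rw [← hFper (n + 1) (k - q), sub_add_cancel]
          have e2 : F^[n + 1] z (k - q) = F^[n + 1] y (k - q) :=
            mid (k - q) (by omega) (by omega)
          have e3 : F^[n + 1] y (k - q) = F^[n + 1] x (k - q) :=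
            hy (n + 1) (k - q) (by omega) (by omega)
          have e4 : F^[n + 1] y k = F^[n + 1] x (k - q) := by
            have := hy2 (n + 1) (k - q) (by omega) (by omega)
            rwa [sub_add_cancel] at this
          rw [e1, e2, e3, ← e4]
  -- z belongs to B
  have hzB : z ∈ B := by
    intro j k h1 h2
    exact (main j k h1 (by omega)).trans (hy j k h1 h2)
  refine ⟨⟨z, hzB, q, hqpos, hperiodic⟩, ?_⟩
  -- eventual periodicity of the column words
  have hFzper : ∀ (j : ℕ), ∀ m : ℤ, F^[j] z (m + q) = F^[j] z m := hFper
  set g : ℕ → (Fin q → A) := fun i t => F^[i] z (t : ℤ) with hg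
  obtain ⟨a, b, hab, hgab⟩ := Finite.exists_ne_map_eq_of_infinite g
  -- wlog a < b
  wlog hlt : a < b generalizing a b
  · exact this b a hab.symm hgab.symm (by omega)
  have hcols : F^[a] z = F^[b] z := by
    funext k
    have h1 : F^[a] z k = F^[a] z (k % q) :=
      periodic_eval_emod hqpos (hFzper a) k
    have h2 : F^[b] z k = F^[b] z (k % q) :=
      periodic_eval_emod hqpos (hFzper b) k
    have hnn : 0 ≤ k % (q : ℤ) := Int.emod_nonneg k (by exact_mod_cast hqpos.ne')
    have hlt' : k % (q : ℤ) < q := Int.emod_lt_of_pos k (by exact_mod_cast hqpos)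
    have hbound : (k % (q : ℤ)).toNat < q := by omega
    have := congrFun hgab ⟨(k % (q : ℤ)).toNat, hbound⟩
    simp only [hg] at this
    rw [h1, h2]
    have hcast : ((⟨(k % (q : ℤ)).toNat, hbound⟩ : Fin q) : ℤ) = k % q := by
      simp [Int.toNat_of_nonneg hnn]
    rw [hcast] at this
    exact this
  refine ⟨a, b - a, by omega, ?_⟩
  intro i hi k h1 h2
  have hiz : F^[i + (b - a)] z = F^[i] z := by
    have e1 : i + (b - a) = (i - a) + b := by omega
    have e2 : i = (i - a) + a := by omega
    rw [e1, Function.iterate_add_apply, ← hcols, ← Function.iterate_add_apply, ← e2]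
  have hx1 : F^[i + (b - a)] x k = F^[i + (b - a)] z k := (hzB (i + (b - a)) k h1 h2).symm
  have hx2 : F^[i] z k = F^[i] x k := hzB i k h1 h2
  rw [hx1, hiz, hx2]
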